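/- Uniqueness of dimensions in standard canonical form (constant case): if diag(I_d, N) X = Y diag(I_{d̃}, Ñ) and diag(Ω, I_a) X = Y diag(Ω̃, I_{ã}) for invertible matrices X, Y (with N, Ñ nilpotent strictly upper triangular and d + a = d̃ + ã = m), then d = d̃ and a = ã. -/

import Mathlib

open Matrix

lemma aux15 (c c' : ℝ) (hc : c ≠ 0) (f g : ℝ → ℝ) (hf : Continuous f) (hg : Continuous g)
    (hf0 : f 0 = 1) (a a' : ℕ) (hlt : a < a')
    (h : ∀ s : ℝ, c * f s * s ^ a = c' * g s * s ^ a') : False := by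
  have key : Set.EqOn (fun s : ℝ => c * f s) (fun s : ℝ => c' * g s * s ^ (a' - a)) {(0:ℝ)}ᶜ := by
    intro s hs
    have hs0 : s ≠ 0 := hs
    have hh := h s
    have hpow : s ^ a' = s ^ (a' - a) * s ^ a := by
      rw [← pow_add]; congr 1; omega
    rw [hpow] at hh
    have h2 : c * f s * s ^ a = (c' * g s * s ^ (a' - a)) * s ^ a := by
      rw [hh]; ring
    exact mul_right_cancel₀ (pow_ne_zero a hs0) h2
  have heq : (fun s : ℝ => c * f s) = fun s : ℝ => c' * g s * s ^ (a' - a) := by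
    apply Continuous.ext_on (dense_compl_singleton (0:ℝ))
    · exact continuous_const.mul hf
    · exact (continuous_const.mul hg).mul (continuous_pow _)
    · exact key
  have h0 := congrFun heq 0
  simp only [hf0, mul_one] at h0
  have hz : (0:ℝ) ^ (a' - a) = 0 := by
    apply zero_pow
    omega
  rw [hz, mul_zero] at h0
  exact hc h0

lemma detTri15 (n : ℕ) (M : Matrix (Fin n) (Fin n) ℝ)
    (hM : ∀ i j : Fin n, j ≤ i → M i j = 0) (s : ℝ) :
    (M - s • (1 : Matrix (Fin n) (Fin n) ℝ)).det = (-s) ^ n := by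
  have htri : (M - s • (1 : Matrix (Fin n) (Fin n) ℝ)).BlockTriangular id := by
    intro i j hij
    simp only [id_eq] at hij
    simp only [Matrix.sub_apply, Matrix.smul_apply, Matrix.one_apply, smul_eq_mul]
    rw [hM i j (le_of_lt hij), if_neg (by exact fun h => absurd h (ne_of_gt hij))]
    simp
  rw [Matrix.det_of_upperTriangular htri]
  have hdiag : ∀ i : Fin n, (M - s • (1 : Matrix (Fin n) (Fin n) ℝ)) i i = -s := by
    intro i
    simp [Matrix.sub_apply, Matrix.smul_apply, Matrix.one_apply, hM i i le_rfl]
  rw [Finset.prod_congr rfl (fun i _ => hdiag i)]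
  simp

/-- Uniqueness of dimensions in the standard canonical form (constant case). -/
theorem stmt15 (d a d' a' : ℕ) (hm : d + a = d' + a')
    (N : Matrix (Fin a) (Fin a) ℝ) (N' : Matrix (Fin a') (Fin a') ℝ)
    (Om : Matrix (Fin d) (Fin d) ℝ) (Om' : Matrix (Fin d') (Fin d') ℝ)
    (hN : ∀ i j : Fin a, j ≤ i → N i j = 0)
    (hN' : ∀ i j : Fin a', j ≤ i → N' i j = 0)
    (X : Matrix (Fin d ⊕ Fin a) (Fin d' ⊕ Fin a') ℝ)
    (Y : Matrix (Fin d' ⊕ Fin a') (Fin d ⊕ Fin a) ℝ)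
    (hX : ∃ X' : Matrix (Fin d' ⊕ Fin a') (Fin d ⊕ Fin a) ℝ, X * X' = 1 ∧ X' * X = 1)
    (hY : ∃ Y' : Matrix (Fin d ⊕ Fin a) (Fin d' ⊕ Fin a') ℝ, Y * Y' = 1 ∧ Y' * Y = 1)
    (h1 : Y * (fromBlocks 1 0 0 N : Matrix (Fin d ⊕ Fin a) (Fin d ⊕ Fin a) ℝ) * X = fromBlocks 1 0 0 N')
    (h2 : Y * (fromBlocks Om 0 0 1 : Matrix (Fin d ⊕ Fin a) (Fin d ⊕ Fin a) ℝ) * X = fromBlocks Om' 0 0 1) :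
    d = d' ∧ a = a' := by
  obtain ⟨X', hXX', hX'X⟩ := hX
  obtain ⟨Y', hYY', hY'Y⟩ := hY
  have hcard : Fintype.card (Fin d' ⊕ Fin a') = Fintype.card (Fin d ⊕ Fin a) := by
    simp [hm.symm]
  let e : (Fin d' ⊕ Fin a') ≃ (Fin d ⊕ Fin a) := Fintype.equivOfCardEq hcard
  set Xe : Matrix (Fin d' ⊕ Fin a') (Fin d' ⊕ Fin a') ℝ := X.submatrix ⇑e id with hXe
  set Ye : Matrix (Fin d' ⊕ Fin a') (Fin d' ⊕ Fin a') ℝ := Y.submatrix id ⇑e with hYe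
  have hdX : Xe.det ≠ 0 := by
    intro h0
    have hprod : Xe * X'.submatrix id ⇑e = 1 := by
      rw [hXe, ← Matrix.submatrix_mul X X' ⇑e id ⇑e Function.bijective_id, hXX',
        Matrix.submatrix_one_equiv]
    have hdet := congrArg Matrix.det hprod
    rw [Matrix.det_mul, h0, Matrix.det_one, zero_mul] at hdet
    exact zero_ne_one hdet
  have hdY : Ye.det ≠ 0 := by
    intro h0
    have hprod : Y'.submatrix ⇑e id * Ye = 1 := by
      rw [hYe, ← Matrix.submatrix_mul Y' Y ⇑e id ⇑e Function.bijective_id, hY'Y,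
        Matrix.submatrix_one_equiv]
    have hdet := congrArg Matrix.det hprod
    rw [Matrix.det_mul, h0, Matrix.det_one, mul_zero] at hdet
    exact zero_ne_one hdet
  have key : ∀ s : ℝ,
      Ye.det * ((1 - s • Om).det * (-s) ^ a) * Xe.det
        = (1 - s • Om').det * (-s) ^ a' := by
    intro s
    have hE : Y * (fromBlocks 1 0 0 N - s • fromBlocks Om 0 0 1) * X
        = fromBlocks 1 0 0 N' - s • fromBlocks Om' 0 0 1 := by
      rw [Matrix.mul_sub, Matrix.mul_smul, Matrix.sub_mul, Matrix.smul_mul, h1, h2]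
    have hL : fromBlocks (1 : Matrix (Fin d) (Fin d) ℝ) 0 0 N - s • fromBlocks Om 0 0 1
        = fromBlocks (1 - s • Om) 0 0 (N - s • 1) := by
      rw [Matrix.fromBlocks_smul, sub_eq_add_neg, Matrix.fromBlocks_neg, Matrix.fromBlocks_add]
      simp [sub_eq_add_neg]
    have hR : fromBlocks (1 : Matrix (Fin d') (Fin d') ℝ) 0 0 N' - s • fromBlocks Om' 0 0 1
        = fromBlocks (1 - s • Om') 0 0 (N' - s • 1) := by
      rw [Matrix.fromBlocks_smul, sub_eq_add_neg, Matrix.fromBlocks_neg, Matrix.fromBlocks_add]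
      simp [sub_eq_add_neg]
    rw [hL, hR] at hE
    have hE2 : Ye * (fromBlocks (1 - s • Om) 0 0 (N - s • 1)).submatrix ⇑e ⇑e * Xe
        = fromBlocks (1 - s • Om') 0 0 (N' - s • 1) := by
      rw [hXe, hYe, Matrix.mul_assoc, Matrix.submatrix_mul_equiv,
        Matrix.submatrix_mul_equiv, Matrix.submatrix_id_id, ← Matrix.mul_assoc, hE]
    have hdet := congrArg Matrix.det hE2
    rw [Matrix.det_mul, Matrix.det_mul, Matrix.det_submatrix_equiv_self,
      Matrix.det_fromBlocks_zero₂₁, Matrix.det_fromBlocks_zero₂₁,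
      detTri15 a N hN s, detTri15 a' N' hN' s] at hdet
    exact hdet
  have key2 : ∀ s : ℝ,
      (Ye.det * Xe.det * (-1 : ℝ) ^ a) * (1 - s • Om).det * s ^ a
        = ((-1 : ℝ) ^ a') * (1 - s • Om').det * s ^ a' := by
    intro s
    have hks := key s
    rw [neg_pow s a, neg_pow s a'] at hks
    nlinarith [hks]
  have hc : Ye.det * Xe.det * (-1 : ℝ) ^ a ≠ 0 := by
    apply mul_ne_zero (mul_ne_zero hdY hdX)
    exact pow_ne_zero _ (by norm_num)
  have hc' : ((-1 : ℝ) ^ a') ≠ 0 := pow_ne_zero _ (by norm_num)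
  have hcontf : Continuous fun s : ℝ => ((1 : Matrix (Fin d) (Fin d) ℝ) - s • Om).det := by
    apply Continuous.matrix_det
    exact continuous_const.sub (continuous_id.smul continuous_const)
  have hcontg : Continuous fun s : ℝ => ((1 : Matrix (Fin d') (Fin d') ℝ) - s • Om').det := by
    apply Continuous.matrix_det
    exact continuous_const.sub (continuous_id.smul continuous_const)
  have hf0 : ((1 : Matrix (Fin d) (Fin d) ℝ) - (0:ℝ) • Om).det = 1 := by simp
  have hg0 : ((1 : Matrix (Fin d') (Fin d') ℝ) - (0:ℝ) • Om').det = 1 := by simp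
  have haa : a = a' := by
    rcases lt_trichotomy a a' with h | h | h
    · exact absurd (aux15 _ _ hc _ _ hcontf hcontg hf0 a a' h key2) id
    · exact h
    · exact absurd (aux15 _ _ hc' _ _ hcontg hcontf hg0 a' a h (fun s => (key2 s).symm)) id
  exact ⟨by omega, haa⟩
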